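/- arXiv:1204.6506 — 6 statements merged into one kernel-verified Lean document; each statement's English description precedes it below -/
import Mathlib

section
/- Let G be a group, H a subgroup of G, and let T be the HNN extension of G with stable letter t centralizing H, i.e. T = ⟨G, t | t⁻¹ h t = h for all h ∈ H⟩ (the HNN extension of G with both associated subgroups equal to H and the identity isomorphism between them). If T is residually finite, then H is closed in the profinite topology of G: for every u ∈ G with u ∉ H there exists a normal subgroup N of finite index in G such that u ∉ NH. -/
open scoped Pointwise

open HNNExtension in
theorem aux_comm_ne_one (G : Type*) [Group G] (H : Subgroup G) (u : G) (hu : u ∉ H) :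
    (of u)⁻¹ * (t⁻¹ * of u * t) ≠ (1 : HNNExtension G H H (MulEquiv.refl H)) := by
  intro h
  have hmem : (t⁻¹ * of u * t : HNNExtension G H H (MulEquiv.refl H)) ∈
      (of.range : Subgroup (HNNExtension G H H (MulEquiv.refl H))) := by
    exact ⟨u, inv_mul_eq_one.mp h⟩
  have chain : ([((-1 : ℤˣ), u), ((1 : ℤˣ), (1 : G))] : List (ℤˣ × G)).Chain'
      (fun a b => a.2 ∈ toSubgroup H H a.1 → a.1 = b.1) := by
    refine List.isChain_cons_cons.2 ⟨fun hmem' => absurd ?_ hu, List.isChain_singleton _⟩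
    simpa [toSubgroup] using hmem'
  let w : NormalWord.ReducedWord G H H :=
    { head := 1, toList := [((-1 : ℤˣ), u), ((1 : ℤˣ), (1 : G))], chain := chain }
  have hprod : w.prod (MulEquiv.refl H) = t⁻¹ * of u * t := by
    simp [w, NormalWord.ReducedWord.prod, mul_assoc, zpow_neg]
  have := HNNExtension.ReducedWord.toList_eq_nil_of_mem_of_range (MulEquiv.refl H) w
    (by rw [hprod]; exact hmem)
  simp [w] at this

/-- If the HNN extension `T = ⟨G, t | t⁻¹ht = h (h ∈ H)⟩` of a group `G` with stable letter
centralizing a subgroup `H` is residually finite, then `H` is closed in the profinite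
topology of `G`: every `u ∈ G \ H` lies outside `NH` for some normal subgroup `N` of finite
index in `G`. -/
theorem profinitely_closed_of_residuallyFinite_hnn_centralizing
    (G : Type*) [Group G] (H : Subgroup G)
    (hT : ∀ g : HNNExtension G H H (MulEquiv.refl H), g ≠ 1 →
      ∃ (K : Type) (_ : Group K) (_ : Finite K)
        (φ : HNNExtension G H H (MulEquiv.refl H) →* K), φ g ≠ 1) :
    ∀ u : G, u ∉ H →
      ∃ N : Subgroup G, N.Normal ∧ N.FiniteIndex ∧ u ∉ ((N : Set G) * (H : Set G)) := by
  intro u hu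
  obtain ⟨K, _, _, φ, hφ⟩ := hT _ (aux_comm_ne_one G H u hu)
  set ψ : G →* K := φ.comp HNNExtension.of with hψ
  refine ⟨ψ.ker, MonoidHom.normal_ker ψ, inferInstance, ?_⟩
  rintro ⟨n, hn, h, hh, rfl⟩
  apply hφ
  have hn1 : φ (HNNExtension.of n) = 1 := hn
  have h1 : (HNNExtension.t⁻¹ * HNNExtension.of h : HNNExtension G H H (MulEquiv.refl H))
      = HNNExtension.of h * HNNExtension.t⁻¹ := by
    simpa using HNNExtension.inv_t_mul_of (φ := MulEquiv.refl H) ⟨h, hh⟩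
  have hcomm : (HNNExtension.t)⁻¹ * HNNExtension.of h * HNNExtension.t
      = (HNNExtension.of h : HNNExtension G H H (MulEquiv.refl H)) := by
    rw [h1, mul_assoc]; simp
  have : φ (HNNExtension.of (n * h)) = φ (HNNExtension.of h) := by
    simp [map_mul, hn1]
  calc φ ((HNNExtension.of (n * h))⁻¹ * (HNNExtension.t⁻¹ * HNNExtension.of (n * h)
        * HNNExtension.t))
      = (φ (HNNExtension.of (n*h)))⁻¹ * ((φ HNNExtension.t)⁻¹ * φ (HNNExtension.of (n*h))
        * φ HNNExtension.t) := by simp [map_mul]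
    _ = (φ (HNNExtension.of h))⁻¹ * ((φ HNNExtension.t)⁻¹ * φ (HNNExtension.of h)
        * φ HNNExtension.t) := by rw [this]
    _ = (φ (HNNExtension.of h))⁻¹ * φ (HNNExtension.t⁻¹ * HNNExtension.of h * HNNExtension.t) := by
        simp [map_mul]
    _ = 1 := by rw [hcomm]; simp
end

section
/- Let G be a group generated by a finite set X with X = X⁻¹, let R be a finite subset of G with R = R⁻¹, let N be the normal closure of R in G, and let E(G,N) = {(u, v) ∈ G × G : u⁻¹v ∈ N}. Then E(G,N) is a subgroup of G × G and is generated by the finite set D = {(r, 1) : r ∈ R} ∪ {(x, x) : x ∈ X}. -/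
/-- Mikhailova-type construction: for `G` generated by a finite symmetric set `X`, `R ⊆ G`
finite and symmetric with normal closure `N`, the equalizer
`E(G,N) = {(u,v) : u⁻¹v ∈ N}` is a subgroup of `G × G` generated by the finite set
`D = {(r,1) : r ∈ R} ∪ {(x,x) : x ∈ X}`. -/
theorem equalizer_eq_closure_of_generators
    (G : Type*) [Group G] (X : Finset G)
    (hXgen : Subgroup.closure (X : Set G) = ⊤)
    (hXsym : (X : Set G) = (X : Set G)⁻¹)
    (R : Finset G)
    (hRsym : (R : Set G) = (R : Set G)⁻¹) :
    {p : G × G | p.1⁻¹ * p.2 ∈ Subgroup.normalClosure (R : Set G)} =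
      (Subgroup.closure
        ((fun r : G => (r, (1 : G))) '' (R : Set G) ∪
          (fun x : G => (x, x)) '' (X : Set G)) : Set (G × G)) := by
  set N := Subgroup.normalClosure (R : Set G) with hN
  set D : Set (G × G) :=
    (fun r : G => (r, (1 : G))) '' (R : Set G) ∪ (fun x : G => (x, x)) '' (X : Set G) with hD
  set H := Subgroup.closure D with hH
  -- every diagonal element lies in H
  have hdiag : ∀ g : G, (g, g) ∈ H := by
    intro g
    have hg : g ∈ Subgroup.closure (X : Set G) := hXgen ▸ Subgroup.mem_top g
    induction hg using Subgroup.closure_induction with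
    | mem x hx => exact Subgroup.subset_closure (Or.inr ⟨x, hx, rfl⟩)
    | one => exact Subgroup.one_mem H
    | mul a b _ _ ha hb => exact mul_mem ha hb
    | inv a _ ha => exact inv_mem ha
  -- (1, n) ∈ H for every n ∈ N
  have hsnd : ∀ n ∈ N, ((1 : G), n) ∈ H := by
    intro n hn
    rw [hN, Subgroup.normalClosure] at hn
    induction hn using Subgroup.closure_induction with
    | mem a ha =>
      obtain ⟨r, hr, hconj⟩ := Group.mem_conjugatesOfSet_iff.mp ha
      obtain ⟨c, hc⟩ := hconj
      have hr1 : ((r : G), (1 : G)) ∈ H := Subgroup.subset_closure (Or.inl ⟨r, hr, rfl⟩)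
      have ha' : a = (c : G) * r * (c : G)⁻¹ := eq_mul_inv_iff_mul_eq.mpr hc.symm
      have key : ((1 : G), a) = ((c : G), (c : G)) * ((r, (1:G))⁻¹ * (r, r)) * ((c : G), (c : G))⁻¹ := by
        rw [ha']
        ext <;> simp
      rw [key]
      exact mul_mem (mul_mem (hdiag c) (mul_mem (inv_mem hr1) (hdiag r))) (inv_mem (hdiag (c : G)))
    | one => exact Subgroup.one_mem H
    | mul a b _ _ ha hb =>
      have := mul_mem ha hb
      simpa using this
    | inv a _ ha =>
      have := inv_mem ha
      simpa using this
  ext p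
  constructor
  · intro hp
    obtain ⟨u, v⟩ := p
    have h : u⁻¹ * v ∈ N := hp
    have : (u, v) = (u, u) * ((1 : G), u⁻¹ * v) := by ext <;> simp
    rw [this]
    exact mul_mem (hdiag u) (hsnd _ h)
  · intro hp
    -- the equalizer as a subgroup
    let φ := QuotientGroup.mk' N
    let E : Subgroup (G × G) :=
      (φ.comp (MonoidHom.fst G G)).eqLocus (φ.comp (MonoidHom.snd G G))
    have hEmem : ∀ q : G × G, q ∈ E ↔ q.1⁻¹ * q.2 ∈ N := by
      intro q
      show φ q.1 = φ q.2 ↔ _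
      exact QuotientGroup.eq
    have hDE : D ⊆ E := by
      rintro q (⟨r, hr, rfl⟩ | ⟨x, hx, rfl⟩)
      · show ((r, (1:G))) ∈ E
        rw [hEmem]
        have hri : r⁻¹ ∈ (R : Set G) := by
          rw [hRsym]; simpa using hr
        simpa using Subgroup.subset_normalClosure hri
      · show ((x, x)) ∈ E
        rw [hEmem]; simpa using one_mem N
    have := (Subgroup.closure_le E).mpr hDE hp
    exact (hEmem p).mp this
end

section
/- Let G be a group generated by a finite set X with X = X⁻¹, let R be a finite subset of G with R = R⁻¹, let N be the normal closure of R in G, let E(G,N) = {(u, v) ∈ G × G : u⁻¹v ∈ N}, and let D = {(r, 1) : r ∈ R} ∪ {(x, x) : x ∈ X}. Then for every w ∈ G, if (w, 1) is equal in G × G to a product of n elements of D, then there exist m ≤ n, elements g₁, …, g_m ∈ G and r₁, …, r_m ∈ R such that w = (g₁ r₁ g₁⁻¹)(g₂ r₂ g₂⁻¹) ⋯ (g_m r_m g_m⁻¹) in G. -/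
private lemma conj_prod_aux {G : Type*} [Group G] (x : G) (L : List (G × G)) :
    (L.map fun p => x * (p.1 * p.2 * p.1⁻¹) * x⁻¹).prod
      = x * (L.map fun p => p.1 * p.2 * p.1⁻¹).prod * x⁻¹ := by
  induction L with
  | nil => simp
  | cons a t ih =>
    simp only [List.map_cons, List.prod_cons, ih]
    group

private lemma mikhailova_aux {G : Type*} [Group G] (R X : Set G) :
    ∀ (l : List (G × G)),
      (∀ d ∈ l, d ∈ ((fun r : G => (r, (1 : G))) '' R ∪ (fun x : G => (x, x)) '' X)) →
      ∀ w s : G, l.prod = (w, s) →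
        ∃ L : List (G × G), L.length ≤ l.length ∧ (∀ p ∈ L, p.2 ∈ R) ∧
          w * s⁻¹ = (L.map fun p => p.1 * p.2 * p.1⁻¹).prod := by
  intro l
  induction l with
  | nil =>
    intro _ w s h
    simp only [List.prod_nil] at h
    have h' : ((1 : G), (1 : G)) = (w, s) := h
    injection h' with h1 h2
    exact ⟨[], by simp, by simp, by simp [← h1, ← h2]⟩
  | cons d t ih =>
    intro hl w s h
    have hd := hl d (by simp)
    have ht : ∀ e ∈ t, e ∈ ((fun r : G => (r, (1 : G))) '' R ∪ (fun x : G => (x, x)) '' X) :=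
      fun e he => hl e (by simp [he])
    rcases hd with ⟨r, hr, hrd⟩ | ⟨x, hx, hxd⟩
    · -- d = (r, 1)
      have hteq : t.prod = (r⁻¹ * w, s) := by
        have : t.prod = d⁻¹ * (d :: t).prod := by simp
        rw [this, h, ← hrd]
        simp [Prod.ext_iff]
      obtain ⟨L, hlen, hmem, heq⟩ := ih ht (r⁻¹ * w) s hteq
      refine ⟨(1, r) :: L, by simpa using Nat.succ_le_succ hlen, ?_, ?_⟩
      · intro p hp
        rcases List.mem_cons.mp hp with h' | h'
        · simp [h', hr]
        · exact hmem p h'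
      · simp only [List.map_cons, List.prod_cons, ← heq]
        group
    · -- d = (x, x)
      have hteq : t.prod = (x⁻¹ * w, x⁻¹ * s) := by
        have : t.prod = d⁻¹ * (d :: t).prod := by simp
        rw [this, h, ← hxd]
        simp [Prod.ext_iff]
      obtain ⟨L, hlen, hmem, heq⟩ := ih ht (x⁻¹ * w) (x⁻¹ * s) hteq
      refine ⟨L.map (fun p => (x * p.1, p.2)), by simpa using Nat.le_succ_of_le hlen, ?_, ?_⟩
      · intro p hp
        obtain ⟨q, hq, rfl⟩ := List.mem_map.mp hp
        exact hmem q hq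
      · have : (L.map (fun p => (x * p.1, p.2))).map (fun p : G × G => p.1 * p.2 * p.1⁻¹)
            = L.map fun p => x * (p.1 * p.2 * p.1⁻¹) * x⁻¹ := by
          rw [List.map_map]
          refine List.map_congr_left fun p _ => ?_
          simp [mul_assoc]
        rw [this, conj_prod_aux, ← heq]
        group

/-- Quantitative Mikhailova lemma: if `(w, 1)` is a product of `n` elements of
`D = {(r,1) : r ∈ R} ∪ {(x,x) : x ∈ X}` in `G × G`, then `w` is a product of `m ≤ n`
conjugates of elements of `R`. -/
theorem mem_of_prod_generators_equalizer
    (G : Type*) [Group G] (X : Finset G)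
    (hXgen : Subgroup.closure (X : Set G) = ⊤)
    (hXsym : (X : Set G) = (X : Set G)⁻¹)
    (R : Finset G)
    (hRsym : (R : Set G) = (R : Set G)⁻¹)
    (w : G) (l : List (G × G))
    (hl : ∀ d ∈ l,
      d ∈ ((fun r : G => (r, (1 : G))) '' (R : Set G) ∪ (fun x : G => (x, x)) '' (X : Set G)))
    (hprod : l.prod = (w, 1)) :
    ∃ m : ℕ, m ≤ l.length ∧
      ∃ (g : Fin m → G) (r : Fin m → G),
        (∀ i, r i ∈ R) ∧
        w = (List.ofFn fun i => g i * r i * (g i)⁻¹).prod := by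
  obtain ⟨L, hlen, hmem, heq⟩ := mikhailova_aux (R : Set G) (X : Set G) l hl w 1 hprod
  refine ⟨L.length, hlen, fun i => (L.get i).1, fun i => (L.get i).2,
    fun i => hmem _ (L.get_mem i), ?_⟩
  have : (List.ofFn fun i => (L.get i).1 * (L.get i).2 * (L.get i).1⁻¹)
      = L.map fun p => p.1 * p.2 * p.1⁻¹ := by
    rw [show (fun i => (L.get i).1 * (L.get i).2 * (L.get i).1⁻¹)
        = (fun p : G × G => p.1 * p.2 * p.1⁻¹) ∘ L.get from rfl,
      ← List.map_ofFn, List.ofFn_get]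
  rw [this, ← heq]
  simp
end

section
/- Let S be a semigroup with a zero element 0 (an element with 0·x = x·0 = 0 for all x ∈ S). Say that y ∈ S divides z ∈ S if z = y, or z = py, or z = yq, or z = pyq for some p, q ∈ S. If every element z ≠ 0 of S has only finitely many divisors, then S is residually finite: for every pair of distinct elements s, t ∈ S there is a homomorphism φ from S to a finite semigroup with φ(s) ≠ φ(t). -/
section Rees
open scoped Classical

variable {S : Type*} [Semigroup S] (D : Set S)

/-- Rees-quotient multiplication on `Option ↥D`. -/
noncomputable def reesMul : Option ↥D → Option ↥D → Option ↥D
  | some a, some b => if h : (a : S) * b ∈ D then some ⟨(a : S) * b, h⟩ else none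
  | _, _ => none

theorem reesMul_assoc (hD : ∀ a b : S, a * b ∈ D → a ∈ D ∧ b ∈ D) :
    ∀ a b c : Option ↥D, reesMul D (reesMul D a b) c = reesMul D a (reesMul D b c) := by
  intro a b c
  cases a with
  | none => rfl
  | some a =>
    cases b with
    | none => rfl
    | some b =>
      cases c with
      | none =>
        have h1 : ∀ x : Option ↥D, reesMul D x none = none := by
          intro x; cases x <;> rfl
        rw [h1, h1, h1]
      | some c =>
        by_cases h : (a : S) * b * c ∈ D
        · have hab : (a : S) * b ∈ D := (hD _ _ h).1
          have hbc : (b : S) * c ∈ D := by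
            have h' : (a : S) * (b * c) ∈ D := by rwa [← mul_assoc]
            exact (hD _ _ h').2
          simp only [reesMul, dif_pos hab, dif_pos hbc, dif_pos h,
            dif_pos (show (a : S) * ((b : S) * c) ∈ D by rwa [← mul_assoc])]
          exact congrArg some (Subtype.ext (mul_assoc _ _ _))
        · have h' : ¬ (a : S) * ((b : S) * c) ∈ D := by rwa [← mul_assoc]
          simp only [reesMul]
          by_cases hab : (a : S) * b ∈ D <;> by_cases hbc : (b : S) * c ∈ D <;>
            simp [hab, hbc, h, h']
  
noncomputable def reesSemigroup (hD : ∀ a b : S, a * b ∈ D → a ∈ D ∧ b ∈ D) : Semigroup (Option ↥D) where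
  mul := reesMul D
  mul_assoc := reesMul_assoc D hD

end Rees

/-- A semigroup with zero in which every nonzero element has only finitely many divisors is
residually finite: any two distinct elements are separated by a homomorphism to a finite
semigroup. Here `y` divides `z` if `z = y`, `z = py`, `z = yq`, or `z = pyq`. -/
theorem residually_finite_of_finitely_many_divisors
    (S : Type*) [Semigroup S] (z : S)
    (hz : ∀ x : S, z * x = z ∧ x * z = z)
    (hfin : ∀ w : S, w ≠ z →
      {y : S | w = y ∨ (∃ p, w = p * y) ∨ (∃ q, w = y * q) ∨ ∃ p q, w = p * y * q}.Finite) :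
    ∀ s t : S, s ≠ t →
      ∃ (T : Type) (_ : Semigroup T) (_ : Finite T) (φ : S →ₙ* T), φ s ≠ φ t := by
  classical
  intro s t hst
  -- pick a nonzero element among s, t
  set w : S := if s = z then t else s with hw
  have hwz : w ≠ z := by
    by_cases h : s = z
    · simpa [hw, h] using fun ht => hst (h.trans ht.symm)
    · simpa [hw, h] using h
  set D : Set S := {y : S | w = y ∨ (∃ p, w = p * y) ∨ (∃ q, w = y * q) ∨ ∃ p q, w = p * y * q}
    with hDdef
  have hD : ∀ a b : S, a * b ∈ D → a ∈ D ∧ b ∈ D := by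
    intro a b hab
    rcases hab with h | ⟨p, h⟩ | ⟨q, h⟩ | ⟨p, q, h⟩
    · exact ⟨Or.inr (Or.inr (Or.inl ⟨b, h⟩)), Or.inr (Or.inl ⟨a, h⟩)⟩
    · constructor
      · exact Or.inr (Or.inr (Or.inr ⟨p, b, by rw [h, mul_assoc]⟩))
      · exact Or.inr (Or.inl ⟨p * a, by rw [h, mul_assoc]⟩)
    · constructor
      · exact Or.inr (Or.inr (Or.inl ⟨b * q, by rw [h, mul_assoc]⟩))
      · exact Or.inr (Or.inr (Or.inr ⟨a, q, h⟩))
    · constructor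
      · exact Or.inr (Or.inr (Or.inr ⟨p, b * q, by rw [h]; simp [mul_assoc]⟩))
      · exact Or.inr (Or.inr (Or.inr ⟨p * a, q, by rw [h]; simp [mul_assoc]⟩))
  have hDfin : D.Finite := hfin w hwz
  have hwD : w ∈ D := Or.inl rfl
  haveI := hDfin.fintype
  -- structure on Option ↥D
  letI sg : Semigroup (Option ↥D) := reesSemigroup D hD
  let φ0 : S →ₙ* Option ↥D :=
    { toFun := fun x => if h : x ∈ D then some ⟨x, h⟩ else none
      map_mul' := by
        intro x y
        by_cases hx : x ∈ D <;> by_cases hy : y ∈ D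
        · show _ = reesMul D _ _
          simp [reesMul, hx, hy]
        · have hxy : ¬ x * y ∈ D := fun h => hy (hD _ _ h).2
          show _ = reesMul D _ _
          simp [reesMul, hx, hy, hxy]
        · have hxy : ¬ x * y ∈ D := fun h => hx (hD _ _ h).1
          show _ = reesMul D _ _
          simp [reesMul, hx, hy, hxy]
        · have hxy : ¬ x * y ∈ D := fun h => hx (hD _ _ h).1
          show _ = reesMul D _ _
          simp [reesMul, hx, hy, hxy] }
  have hsep : φ0 s ≠ φ0 t := by
    have hst' : s ∈ D ∨ t ∈ D := by
      by_cases h : s = z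
      · right; rw [hw] at hwD; simpa [h] using hwD
      · left; rw [hw] at hwD; simpa [h] using hwD
    show (if h : s ∈ D then some (⟨s, h⟩ : ↥D) else none) ≠
        (if h : t ∈ D then some (⟨t, h⟩ : ↥D) else none)
    by_cases hs : s ∈ D <;> by_cases ht : t ∈ D <;>
      simp [hs, ht, Subtype.ext_iff, hst]
    tauto
  -- transfer to a type in `Type 0`
  let n := Fintype.card ↥D
  let e : ↥D ≃ Fin n := Fintype.equivFin ↥D
  let E : Option ↥D ≃ Option (Fin n) := e.optionCongr
  letI sg' : Semigroup (Option (Fin n)) := E.symm.semigroup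
  have hEmul : ∀ a b : Option ↥D, E (a * b) = E a * E b := by
    intro a b
    show E (a * b) = E (E.symm (E a) * E.symm (E b))
    simp
  refine ⟨Option (Fin n), sg', inferInstance,
    { toFun := fun x => E (φ0 x)
      map_mul' := by
        intro x y
        show E (φ0 (x * y)) = E (φ0 x) * E (φ0 y)
        rw [map_mul, hEmul] }, ?_⟩
  simp only [ne_eq, EmbeddingLike.apply_eq_iff_eq]
  exact fun h => hsep (E.injective h)
end

section
/- (Baumslag–Remeslennikov, in the case f(t) = t − 1.) Let H be a group generated by X ∪ F ∪ F', where F = {a₁, …, a_m} and F' = {a'₁, …, a'_m}, and suppose: (1) the subgroup of H generated by F ∪ F' is abelian; (2) for every i ∈ {1, …, m} and every x ∈ X, (aᵢ⁻¹ x aᵢ) x⁻¹ = (a'ᵢ)⁻¹ x a'ᵢ; (3) for all x₁, x₂ ∈ X and all α₁, …, α_m ∈ {−1, 0, 1}, the element z⁻¹ x₁ z commutes with x₂, where z = a₁^{α₁} a₂^{α₂} ⋯ a_m^{α_m}. Then the normal closure of X in H is abelian, and consequently H is metabelian (its second derived subgroup is trivial). -/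
namespace BRaux
variable {H : Type*} [Group H]

def cj (g x : H) : H := g⁻¹ * x * g

lemma cj_cj (g h x : H) : cj h (cj g x) = cj (g * h) x := by simp [cj, mul_assoc]
lemma cj_one (x : H) : cj 1 x = x := by simp [cj]
lemma cj_mul (g x y : H) : cj g (x * y) = cj g x * cj g y := by simp [cj, mul_assoc]
lemma cj_inv (g x : H) : cj g x⁻¹ = (cj g x)⁻¹ := by simp [cj, mul_assoc]
lemma cj_cj_inv (g x : H) : cj g⁻¹ (cj g x) = x := by simp [cj, mul_assoc]
lemma cj_inv_cj (g x : H) : cj g (cj g⁻¹ x) = x := by simp [cj, mul_assoc]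

lemma commute_cj {x y : H} (h : Commute x y) (g : H) : Commute (cj g x) (cj g y) := by
  have : cj g (x * y) = cj g (y * x) := by rw [h.eq]
  rw [cj_mul, cj_mul] at this; exact this

lemma closure_comm {S : Set H} (h : ∀ x ∈ S, ∀ y ∈ S, Commute x y) :
    ∀ u ∈ Subgroup.closure S, ∀ v ∈ Subgroup.closure S, Commute u v := by
  have step : ∀ s ∈ S, ∀ v ∈ Subgroup.closure S, Commute s v := by
    intro s hs v hv
    induction hv using Subgroup.closure_induction with
    | mem y hy => exact h s hs y hy
    | one => exact Commute.one_right s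
    | mul y z _ _ hy hz => exact hy.mul_right hz
    | inv y _ hy => exact hy.inv_right
  intro u hu v hv
  induction hu using Subgroup.closure_induction with
  | mem y hy => exact step y hy v hv
  | one => exact Commute.one_left v
  | mul y z _ _ hy hz => exact hy.mul_left hz
  | inv y _ hy => exact hy.inv_left

end BRaux

open BRaux Subgroup
open scoped commutatorElement

/-- Baumslag–Remeslennikov lemma (case `f(t) = t - 1`): if `H` is generated by
`X ∪ {a₁,…,a_m} ∪ {a'₁,…,a'_m}` such that (1) the subgroup generated by the `aᵢ` and `a'ᵢ`
is abelian, (2) `x^{aᵢ} x⁻¹ = x^{a'ᵢ}` for all `x ∈ X` and all `i`, and (3) `x₁^z` commutes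
with `x₂` for all `x₁, x₂ ∈ X` and `z = a₁^{α₁} ⋯ a_m^{α_m}` with `αᵢ ∈ {-1,0,1}`, then the
normal closure of `X` in `H` is abelian and `H` is metabelian. -/
theorem baumslag_remeslennikov
    (H : Type*) [Group H] (m : ℕ) (X : Set H) (a a' : Fin m → H)
    (hgen : Subgroup.closure (X ∪ Set.range a ∪ Set.range a') = ⊤)
    (h1 : ∀ u ∈ Subgroup.closure (Set.range a ∪ Set.range a'),
          ∀ v ∈ Subgroup.closure (Set.range a ∪ Set.range a'), u * v = v * u)
    (h2 : ∀ i : Fin m, ∀ x ∈ X,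
          ((a i)⁻¹ * x * a i) * x⁻¹ = (a' i)⁻¹ * x * a' i)
    (h3 : ∀ x₁ ∈ X, ∀ x₂ ∈ X, ∀ α : Fin m → ℤ,
          (∀ i, α i = -1 ∨ α i = 0 ∨ α i = 1) →
          ((List.ofFn fun i => a i ^ α i).prod⁻¹ * x₁ * (List.ofFn fun i => a i ^ α i).prod)
              * x₂ =
            x₂ *
            ((List.ofFn fun i => a i ^ α i).prod⁻¹ * x₁ *
              (List.ofFn fun i => a i ^ α i).prod)) :
    (∀ u ∈ Subgroup.normalClosure X, ∀ v ∈ Subgroup.normalClosure X, u * v = v * u) ∧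
      derivedSeries H 2 = ⊥ := by
  set A : Subgroup H := Subgroup.closure (Set.range a ∪ Set.range a') with hA
  letI : CommGroup ↥A :=
    { (inferInstance : Group ↥A) with
      mul_comm := fun u v => Subtype.ext (h1 u u.2 v v.2) }
  have memA : ∀ i, a i ∈ A := fun i =>
    Subgroup.subset_closure (Or.inl ⟨i, rfl⟩)
  have memA' : ∀ i, a' i ∈ A := fun i =>
    Subgroup.subset_closure (Or.inr ⟨i, rfl⟩)
  set aa : Fin m → ↥A := fun i => ⟨a i, memA i⟩ with haa
  set aa' : Fin m → ↥A := fun i => ⟨a' i, memA' i⟩ with haa'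
  set p : (Fin m → ℤ) → ↥A := fun β => ∏ i, aa i ^ β i with hp
  set p' : (Fin m → ℤ) → ↥A := fun γ => ∏ i, aa' i ^ γ i with hp'
  -- coercion of p to the List.ofFn product
  have hpcoe : ∀ β, ((p β : ↥A) : H) = (List.ofFn fun i => a i ^ β i).prod := by
    intro β
    simp only [hp]
    rw [← List.prod_ofFn (f := fun i => aa i ^ β i)]
    show A.subtype _ = _
    rw [← List.prod_hom _ A.subtype, List.map_ofFn]
    congr 1
  have hpadd : ∀ β γ, p (β + γ) = p β * p γ := by
    intro β γ
    simp [hp, Finset.prod_mul_distrib.symm, zpow_add, Pi.add_apply]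
  have hp'add : ∀ β γ, p' (β + γ) = p' β * p' γ := by
    intro β γ
    simp [hp', Finset.prod_mul_distrib.symm, zpow_add, Pi.add_apply]
  have hpsingle : ∀ i, p (Pi.single i 1) = aa i := by
    intro i
    simp only [hp]
    rw [Finset.prod_eq_single i (fun j _ hj => by simp [Pi.single_eq_of_ne hj]) (by simp)]
    simp
  have hp'single : ∀ i, p' (Pi.single i 1) = aa' i := by
    intro i
    simp only [hp']
    rw [Finset.prod_eq_single i (fun j _ hj => by simp [Pi.single_eq_of_ne hj]) (by simp)]
    simp
  have hpneg : ∀ β, p (-β) = (p β)⁻¹ := by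
    intro β
    simp [hp, zpow_neg, Finset.prod_inv_distrib]
  -- the star identity
  have hstar : ∀ i, ∀ x ∈ X, ∀ g ∈ A,
      cj (a i) (cj g x) = cj (a' i) (cj g x) * cj g x := by
    intro i x hx g hg
    have e : cj (a i) x = cj (a' i) x * x := mul_inv_eq_iff_eq_mul.mp (h2 i x hx)
    have hc : g * a i = a i * g := h1 g hg (a i) (memA i)
    have hc' : g * a' i = a' i * g := h1 g hg (a' i) (memA' i)
    calc cj (a i) (cj g x) = cj (g * a i) x := cj_cj _ _ _
      _ = cj (a i * g) x := by rw [hc]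
      _ = cj g (cj (a i) x) := (cj_cj _ _ _).symm
      _ = cj g (cj (a' i) x * x) := by rw [e]
      _ = cj g (cj (a' i) x) * cj g x := cj_mul _ _ _
      _ = cj (a' i * g) x * cj g x := by rw [cj_cj]
      _ = cj (g * a' i) x * cj g x := by rw [hc']
      _ = cj (a' i) (cj g x) * cj g x := by rw [← cj_cj]
  -- the commuting predicate
  set T : H → Prop := fun g => ∀ x₁ ∈ X, ∀ x₂ ∈ X, Commute (cj g x₁) x₂ with hT
  have hTbase : ∀ α : Fin m → ℤ, (∀ i, α i = -1 ∨ α i = 0 ∨ α i = 1) → T ↑(p α) := by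
    intro α hα
    simp only [hT]
    intro x₁ hx₁ x₂ hx₂
    have h := h3 x₁ hx₁ x₂ hx₂ α hα
    rw [← hpcoe α] at h
    exact h
  have hTinv : ∀ g : H, T g → T g⁻¹ := by
    intro g hg
    simp only [hT] at hg ⊢
    intro x₁ hx₁ x₂ hx₂
    have h := (hg x₂ hx₂ x₁ hx₁).symm
    have hcc := commute_cj h g⁻¹
    rwa [cj_cj_inv] at hcc

  -- main weight induction
  set w : (Fin m → ℤ) → ℕ := fun δ => ∑ i, ((δ i).natAbs - 1) with hw
  have main : ∀ n : ℕ, ∀ δ : Fin m → ℤ, w δ ≤ n → T ↑(p δ) := by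
    intro n
    induction n with
    | zero =>
      intro δ hδ
      apply hTbase
      intro i
      simp only [hw] at hδ
      have h0 := (Finset.sum_eq_zero_iff).mp (Nat.le_zero.mp hδ) i (Finset.mem_univ i)
      omega
    | succ n IH =>
      intro δ hδ
      by_cases hle : w δ ≤ n
      · exact IH δ hle
      have step_pos : ∀ δ : Fin m → ℤ, ∀ i, w δ ≤ n + 1 → 2 ≤ δ i → T ↑(p δ) := by
        intro δ i hδ hge
        simp only [hT]
        intro x₁ hx₁ x₂ hx₂
        set b := a' i with hb
        set c := a i with hc
        set q : ℤ → H := fun t => (↑(p (Function.update δ i t)) : H) with hq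
        have hqA : ∀ t, q t ∈ A := fun t => (p _).2
        have hqs : ∀ t, q (t + 1) = q t * c := by
          intro t
          have e1 : Function.update δ i (t+1) = Function.update δ i t + Pi.single i 1 := by
            funext j
            by_cases hj : j = i
            · subst hj; simp
            · simp [Function.update_of_ne hj, Pi.single_eq_of_ne hj]
          simp only [hq]
          rw [e1, hpadd, hpsingle]
          rfl
        have hwupd : ∀ t : ℤ, t.natAbs ≤ (δ i).natAbs - 1 →
            w (Function.update δ i t) ≤ n := by
          intro t ht
          have e1 : w (Function.update δ i t)
              = (t.natAbs - 1) + ∑ j ∈ Finset.univ \ {i}, ((δ j).natAbs - 1) := by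
            simp only [hw]
            rw [Finset.sum_eq_add_sum_sdiff_singleton_of_mem (Finset.mem_univ i)
              (fun j => ((Function.update δ i t j).natAbs - 1))]
            rw [Function.update_self]
            congr 1
            refine Finset.sum_congr rfl fun j hj => ?_
            have hji : j ≠ i := by simpa using (Finset.mem_sdiff.mp hj).2
            rw [Function.update_of_ne hji]
          have e2 : w δ = ((δ i).natAbs - 1) + ∑ j ∈ Finset.univ \ {i}, ((δ j).natAbs - 1) := by
            simp only [hw]
            exact Finset.sum_eq_add_sum_sdiff_singleton_of_mem (Finset.mem_univ i) _
          omega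
        have hIH : ∀ t : ℤ, t.natAbs ≤ (δ i).natAbs - 1 →
            ∀ u₁ ∈ X, ∀ u₂ ∈ X, Commute (cj (q t) u₁) u₂ := by
          intro t ht
          have hh := IH _ (hwupd t ht)
          simp only [hT] at hh
          exact hh
        set y : ℤ → H := fun t => cj (q t) x₁ with hy
        set P : ℤ → H := fun t => cj b⁻¹ (y t) with hPd
        have hyc : ∀ t, y (t + 1) = cj c (y t) := by
          intro t
          simp only [hy]
          rw [hqs t, ← cj_cj]
        have hbc : c * b⁻¹ = b⁻¹ * c := by
          have hcm : Commute b c := h1 b (memA' i) c (memA i)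
          exact (hcm.inv_left.eq).symm
        have hPs : ∀ t, P (t + 1) = y t * P t := by
          intro t
          have hg0 : q t * b⁻¹ ∈ A := mul_mem (hqA t) (inv_mem (memA' i))
          have e2 : P t = cj (q t * b⁻¹) x₁ := by
            simp only [hPd, hy]
            rw [cj_cj]
          have e3 := hstar i x₁ hx₁ _ hg0
          have e1 : P (t+1) = cj c (P t) := by
            simp only [hPd]
            rw [hyc t, cj_cj, hbc, ← cj_cj]
          have e4 : cj b (P t) = y t := by
            simp only [hPd]
            rw [cj_inv_cj]
          calc P (t+1) = cj c (P t) := e1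
            _ = cj c (cj (q t * b⁻¹) x₁) := by rw [← e2]
            _ = cj b (cj (q t * b⁻¹) x₁) * cj (q t * b⁻¹) x₁ := e3
            _ = cj b (P t) * P t := by rw [← e2]
            _ = y t * P t := by rw [e4]
        have hF1 : ∀ t : ℤ, t.natAbs ≤ (δ i).natAbs - 1 → Commute (y t) x₂ :=
          fun t ht => hIH t ht x₁ hx₁ x₂ hx₂
        have hF2 : ∀ t : ℤ, (t-1).natAbs ≤ (δ i).natAbs - 1 → Commute (y t) (cj c x₂) := by
          intro t ht
          have hcm := commute_cj (hF1 (t-1) ht) c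
          have e : cj c (y (t-1)) = y t := by
            rw [← hyc (t-1), sub_add_cancel]
          rwa [e] at hcm
        have hstar0 : cj c x₂ = cj b x₂ * x₂ := by
          have hh := hstar i x₂ hx₂ 1 (one_mem A)
          rwa [cj_one] at hh
        have hF5' : cj b⁻¹ (cj c x₂) = x₂ * cj b⁻¹ x₂ := by
          rw [hstar0, cj_mul, cj_cj_inv]
        have hF4 : ∀ t : ℤ, t.natAbs ≤ (δ i).natAbs - 1 → Commute (P t) (cj b⁻¹ x₂) :=
          fun t ht => commute_cj (hF1 t ht) b⁻¹
        have hF5 : ∀ t : ℤ, (t-1).natAbs ≤ (δ i).natAbs - 1 →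
            Commute (P t) (x₂ * cj b⁻¹ x₂) := by
          intro t ht
          have hcm := commute_cj (hF2 t ht) b⁻¹
          rwa [hF5'] at hcm
        have hF6 : ∀ t : ℤ, t.natAbs ≤ (δ i).natAbs - 1 → (t-1).natAbs ≤ (δ i).natAbs - 1 →
            Commute (P t) x₂ := by
          intro t h1t h2t
          have hcm := (hF5 t h2t).mul_right (hF4 t h1t).inv_right
          rwa [mul_inv_cancel_right] at hcm
        have hnn1 : (δ i - 1).natAbs ≤ (δ i).natAbs - 1 := by omega
        have hnn2 : (δ i - 1 - 1).natAbs ≤ (δ i).natAbs - 1 := by omega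
        have hPn : P (δ i) = y (δ i - 1) * P (δ i - 1) := by
          have hh := hPs (δ i - 1)
          rwa [sub_add_cancel] at hh
        have hcPn : Commute (P (δ i)) x₂ := by
          rw [hPn]
          exact (hF1 _ hnn1).mul_left (hF6 _ hnn1 hnn2)
        have hbPn : cj b (P (δ i)) = y (δ i) := by
          simp only [hPd]
          rw [cj_inv_cj]
        have hA1 : Commute (y (δ i)) (cj b x₂) := by
          have hcm := commute_cj hcPn b
          rwa [hbPn] at hcm
        have hA2 : Commute (y (δ i)) (cj c x₂) := hF2 (δ i) hnn1
        have hfin : Commute (y (δ i)) x₂ := by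
          have h' := hA1.inv_right.mul_right hA2
          have e : (cj b x₂)⁻¹ * cj c x₂ = x₂ := by
            rw [hstar0]; group
          rwa [e] at h'
        have hqnn : q (δ i) = ↑(p δ) := by
          simp only [hq]
          rw [Function.update_eq_self]
        simpa only [hy, hqnn] using hfin
      have hex : ∃ i, 2 ≤ (δ i).natAbs := by
        by_contra hno
        push_neg at hno
        have hz : w δ = 0 := by
          simp only [hw]
          apply Finset.sum_eq_zero
          intro j _
          have := hno j
          omega
        omega
      obtain ⟨i, hi⟩ := hex
      by_cases hpos : 2 ≤ δ i
      · exact step_pos δ i hδ hpos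
      · have hneg2 : 2 ≤ (-δ) i := by
          simp only [Pi.neg_apply]
          omega
        have hwneg : w (-δ) ≤ n + 1 := by
          simp only [hw, Pi.neg_apply, Int.natAbs_neg]
          simpa only [hw] using hδ
        have hTneg := step_pos (-δ) i hwneg hneg2
        have hTd := hTinv _ hTneg
        have e : ((p (-δ) : ↥A) : H)⁻¹ = ↑(p δ) := by
          rw [hpneg]
          simp
        rwa [e] at hTd
  -- eliminate the a' part
  have hp'neg : ∀ γ, p' (-γ) = (p' γ)⁻¹ := by
    intro γ
    simp [hp', zpow_neg, Finset.prod_inv_distrib]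
  have hp'zero : p' (0 : Fin m → ℤ) = 1 := by simp [hp']
  have hpzero : p (0 : Fin m → ℤ) = 1 := by simp [hp]
  have Tfull : ∀ β γ : Fin m → ℤ, T ↑(p β * p' γ) := by
    have key : ∀ n : ℕ, ∀ β γ : Fin m → ℤ, (∑ i, (γ i).natAbs) ≤ n → T ↑(p β * p' γ) := by
      intro n
      induction n with
      | zero =>
        intro β γ hγ
        have hγ0 : γ = 0 := by
          funext j
          have := Finset.sum_eq_zero_iff.mp (Nat.le_zero.mp hγ) j (Finset.mem_univ j)
          simpa using (by omega : γ j = 0)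
        subst hγ0
        rw [hp'zero, mul_one]
        exact main (w β) β le_rfl
      | succ n IH =>
        intro β γ hγ
        by_cases h0 : ∑ i, (γ i).natAbs ≤ n
        · exact IH β γ h0
        have hex : ∃ i, γ i ≠ 0 := by
          by_contra hno
          push_neg at hno
          have hz : ∑ i, (γ i).natAbs = 0 :=
            Finset.sum_eq_zero fun j _ => by rw [hno j]; simp
          omega
        obtain ⟨i, hi⟩ := hex
        have hsum : ∀ t : ℤ, t.natAbs ≤ (γ i).natAbs - 1 →
            (∑ j, ((Function.update γ i t j).natAbs)) ≤ n := by
          intro t ht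
          have e1 : (∑ j, ((Function.update γ i t j).natAbs))
              = t.natAbs + ∑ j ∈ Finset.univ \ {i}, (γ j).natAbs := by
            rw [Finset.sum_eq_add_sum_sdiff_singleton_of_mem (Finset.mem_univ i)
              (fun j => (Function.update γ i t j).natAbs)]
            rw [Function.update_self]
            congr 1
            refine Finset.sum_congr rfl fun j hj => ?_
            have hji : j ≠ i := by simpa using (Finset.mem_sdiff.mp hj).2
            rw [Function.update_of_ne hji]
          have e2 : (∑ j, (γ j).natAbs)
              = (γ i).natAbs + ∑ j ∈ Finset.univ \ {i}, (γ j).natAbs :=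
            Finset.sum_eq_add_sum_sdiff_singleton_of_mem (Finset.mem_univ i) _
          omega
        rcases lt_or_gt_of_ne hi with hneg | hpos
        · -- γ i < 0
          set γ' := Function.update γ i (γ i + 1) with hγ'
          have hγeq : γ = γ' + (-(Pi.single i 1)) := by
            funext j
            by_cases hj : j = i
            · subst hj; simp [hγ']
            · simp [hγ', Function.update_of_ne hj, Pi.single_eq_of_ne hj]
          have hIH1 : T ↑(p β * p' γ') := IH β γ' (hsum _ (by omega))
          have hIH2 : T ↑(p (β + (-(Pi.single i 1))) * p' γ') :=
            IH _ γ' (hsum _ (by omega))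
          have ecoe : (↑(p β * p' γ) : H) = ↑(p β * p' γ') * (a' i)⁻¹ := by
            rw [hγeq, hp'add, hp'neg, hp'single, ← mul_assoc]
            push_cast
            rfl
          have ecoe2 : (↑(p (β + (-(Pi.single i 1))) * p' γ') : H)
              = ↑(p β * p' γ') * (a i)⁻¹ := by
            rw [hpadd, hpneg, hpsingle]
            have hcm : (↑(p' γ') : H) * (a i)⁻¹ = (a i)⁻¹ * ↑(p' γ') := by
              have h' : a i * ↑(p' γ') = ↑(p' γ') * a i := h1 _ (memA i) _ (p' γ').2
              rw [mul_inv_eq_iff_eq_mul, mul_assoc, ← h', inv_mul_cancel_left]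
            push_cast
            rw [mul_assoc, ← hcm, ← mul_assoc]
          simp only [hT]
          intro x₁ hx₁ x₂ hx₂
          simp only [hT] at hIH1 hIH2
          set g' : H := ↑(p β * p' γ') with hg'
          have hc1 : Commute (cj g' x₁) (cj (a i) x₂) := by
            have hcm := commute_cj (hIH2 x₁ hx₁ x₂ hx₂) (a i)
            rw [ecoe2] at hcm
            rwa [cj_cj, inv_mul_cancel_right] at hcm
          have hstar0 : cj (a i) x₂ = cj (a' i) x₂ * x₂ := by
            have hh := hstar i x₂ hx₂ 1 (one_mem A)
            rwa [cj_one] at hh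
          have hc2 : Commute (cj g' x₁) (cj (a' i) x₂) := by
            have e : cj (a' i) x₂ = cj (a i) x₂ * x₂⁻¹ := by
              rw [hstar0]; group
            rw [e]
            exact hc1.mul_right (hIH1 x₁ hx₁ x₂ hx₂).inv_right
          have hcm := commute_cj hc2 (a' i)⁻¹
          rw [cj_cj, cj_cj_inv] at hcm
          rwa [ecoe]
        · -- γ i > 0
          set γ' := Function.update γ i (γ i - 1) with hγ'
          have hγeq : γ = γ' + Pi.single i 1 := by
            funext j
            by_cases hj : j = i
            · subst hj; simp [hγ']
            · simp [hγ', Function.update_of_ne hj, Pi.single_eq_of_ne hj]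
          have hIH1 : T ↑(p β * p' γ') := IH β γ' (hsum _ (by omega))
          have hIH2 : T ↑(p (β + Pi.single i 1) * p' γ') :=
            IH _ γ' (hsum _ (by omega))
          have ecoe : (↑(p β * p' γ) : H) = ↑(p β * p' γ') * a' i := by
            rw [hγeq, hp'add, hp'single, ← mul_assoc]
            push_cast
            rfl
          have ecoe2 : (↑(p (β + Pi.single i 1) * p' γ') : H)
              = ↑(p β * p' γ') * a i := by
            rw [hpadd, hpsingle]
            have hcm : (↑(p' γ') : H) * a i = a i * ↑(p' γ') :=
              h1 _ (p' γ').2 _ (memA i)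
            push_cast
            rw [mul_assoc, ← hcm, ← mul_assoc]
          simp only [hT]
          intro x₁ hx₁ x₂ hx₂
          simp only [hT] at hIH1 hIH2
          set g' : H := ↑(p β * p' γ') with hg'
          have estar := hstar i x₁ hx₁ g' (p β * p' γ').2
          have e5 : cj (g' * a' i) x₁ = cj (g' * a i) x₁ * (cj g' x₁)⁻¹ := by
            rw [← cj_cj, ← cj_cj (g := g') (h := a i), estar]
            group
          rw [ecoe]
          rw [e5, ← ecoe2]
          exact (hIH2 x₁ hx₁ x₂ hx₂).mul_left (hIH1 x₁ hx₁ x₂ hx₂).inv_left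
    exact fun β γ => key _ β γ le_rfl
  have hrepr : ∀ g ∈ A, ∃ β γ, g = ↑(p β * p' γ) := by
    intro g hg
    rw [hA] at hg
    induction hg using Subgroup.closure_induction with
    | mem t ht =>
      rcases ht with ⟨i, rfl⟩ | ⟨i, rfl⟩
      · exact ⟨Pi.single i 1, 0, by rw [hpsingle, hp'zero, mul_one]⟩
      · exact ⟨0, Pi.single i 1, by rw [hp'single, hpzero, one_mul]⟩
    | one => exact ⟨0, 0, by rw [hpzero, hp'zero, mul_one]; rfl⟩
    | mul u v hu hv ihu ihv =>
      obtain ⟨β₁, γ₁, rfl⟩ := ihu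
      obtain ⟨β₂, γ₂, rfl⟩ := ihv
      refine ⟨β₁ + β₂, γ₁ + γ₂, ?_⟩
      have e : p β₁ * p' γ₁ * (p β₂ * p' γ₂) = p β₁ * p β₂ * (p' γ₁ * p' γ₂) := by
        rw [mul_assoc, mul_assoc, mul_comm (p' γ₁) (p β₂ * p' γ₂), mul_assoc,
          mul_comm (p' γ₂) (p' γ₁)]
      rw [hpadd, hp'add, ← e]
      push_cast
      group
    | inv u hu ihu =>
      obtain ⟨β, γ, rfl⟩ := ihu
      refine ⟨-β, -γ, ?_⟩
      rw [hpneg, hp'neg, ← mul_inv_rev, mul_comm (p' γ) (p β)]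
      rfl
  have TA : ∀ g ∈ A, T g := by
    intro g hg
    obtain ⟨β, γ, rfl⟩ := hrepr g hg
    exact Tfull β γ
  -- the subgroup K
  set S : Set H := {h | ∃ x ∈ X, ∃ g ∈ A, h = cj g x} with hS
  have hScomm : ∀ u ∈ S, ∀ v ∈ S, Commute u v := by
    rintro u ⟨x₁, hx₁, g₁, hg₁, rfl⟩ v ⟨x₂, hx₂, g₂, hg₂, rfl⟩
    have hgg : g₁ * g₂⁻¹ ∈ A := mul_mem hg₁ (inv_mem hg₂)
    have hTg := TA _ hgg
    simp only [hT] at hTg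
    have hcm := commute_cj (hTg x₁ hx₁ x₂ hx₂) g₂
    rwa [cj_cj, inv_mul_cancel_right] at hcm
  set K : Subgroup H := Subgroup.closure S with hK
  have hXK : X ⊆ ↑K := by
    intro x hx
    exact Subgroup.subset_closure ⟨x, hx, 1, one_mem A, (cj_one x).symm⟩
  have hcjK : ∀ g ∈ A, ∀ s ∈ K, cj g s ∈ K := by
    intro g hg s hs
    induction hs using Subgroup.closure_induction with
    | mem t ht =>
      obtain ⟨x, hx, g', hg', rfl⟩ := ht
      rw [cj_cj]
      exact Subgroup.subset_closure ⟨x, hx, g' * g, mul_mem hg' hg, rfl⟩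
    | one =>
      have : cj g (1 : H) = 1 := by simp [cj]
      rw [this]; exact one_mem K
    | mul u v _ _ ihu ihv => rw [cj_mul]; exact mul_mem ihu ihv
    | inv u _ ihu => rw [cj_inv]; exact inv_mem ihu
  have hKnorm2 : ∀ g ∈ Subgroup.closure (X ∪ Set.range a ∪ Set.range a'),
      (∀ s ∈ K, g * s * g⁻¹ ∈ K) ∧ (∀ s ∈ K, g⁻¹ * s * g ∈ K) := by
    intro g hg
    induction hg using Subgroup.closure_induction with
    | mem t ht =>
      rcases ht with htX | htA
      rcases htX with htX | htA'
      · have htK : t ∈ K := hXK htX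
        exact ⟨fun s hs => mul_mem (mul_mem htK hs) (inv_mem htK),
          fun s hs => mul_mem (mul_mem (inv_mem htK) hs) htK⟩
      · have htA2 : t ∈ A := Subgroup.subset_closure (Or.inl htA')
        constructor
        · intro s hs
          have := hcjK t⁻¹ (inv_mem htA2) s hs
          simpa [cj] using this
        · intro s hs
          have := hcjK t htA2 s hs
          simpa [cj] using this
      · have htA2 : t ∈ A := Subgroup.subset_closure (Or.inr htA)
        constructor
        · intro s hs
          have := hcjK t⁻¹ (inv_mem htA2) s hs
          simpa [cj] using this
        · intro s hs
          have := hcjK t htA2 s hs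
          simpa [cj] using this
    | one => simp
    | mul u v _ _ ihu ihv =>
      constructor
      · intro s hs
        have hh := ihu.1 _ (ihv.1 s hs)
        rwa [show u * (v * s * v⁻¹) * u⁻¹ = (u * v) * s * (u * v)⁻¹ from by group] at hh
      · intro s hs
        have hh := ihv.2 _ (ihu.2 s hs)
        rwa [show v⁻¹ * (u⁻¹ * s * u) * v = (u * v)⁻¹ * s * (u * v) from by group] at hh
    | inv u _ ihu =>
      refine ⟨fun s hs => ?_, fun s hs => ?_⟩
      · simpa using ihu.2 s hs
      · simpa using ihu.1 s hs
  haveI : K.Normal := ⟨fun s hs g => (hKnorm2 g (by rw [hgen]; trivial)).1 s hs⟩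
  have hNK : Subgroup.normalClosure X ≤ K := Subgroup.normalClosure_le_normal hXK
  have part1 : ∀ u ∈ Subgroup.normalClosure X, ∀ v ∈ Subgroup.normalClosure X,
      u * v = v * u := by
    intro u hu v hv
    exact closure_comm hScomm u (hNK hu) v (hNK hv)
  refine ⟨part1, ?_⟩
  set N := Subgroup.normalClosure X with hN
  have hsurj : Subgroup.closure
      ((QuotientGroup.mk' N) '' (X ∪ Set.range a ∪ Set.range a')) = ⊤ := by
    rw [← MonoidHom.map_closure, hgen]
    exact Subgroup.map_top_of_surjective _ (QuotientGroup.mk'_surjective N)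
  have hgc : ∀ u ∈ (QuotientGroup.mk' N) '' (X ∪ Set.range a ∪ Set.range a'),
      ∀ v ∈ (QuotientGroup.mk' N) '' (X ∪ Set.range a ∪ Set.range a'), Commute u v := by
    rintro u ⟨t₁, ht₁, rfl⟩ v ⟨t₂, ht₂, rfl⟩
    have hone : ∀ t ∈ X, (QuotientGroup.mk' N) t = 1 := fun t ht =>
      (QuotientGroup.eq_one_iff t).mpr (Subgroup.subset_normalClosure ht)
    rcases ht₁ with ht₁X | ht₁A
    rcases ht₁X with ht₁X | ht₁A'
    · rw [hone t₁ ht₁X]; exact Commute.one_left _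
    · rcases ht₂ with ht₂X | ht₂A
      rcases ht₂X with ht₂X | ht₂A'
      · rw [hone t₂ ht₂X]; exact Commute.one_right _
      · have hc : t₁ * t₂ = t₂ * t₁ :=
          h1 t₁ (Subgroup.subset_closure (Or.inl ht₁A')) t₂ (Subgroup.subset_closure (Or.inl ht₂A'))
        show _ * _ = _ * _
        rw [← map_mul, ← map_mul, hc]
      · have hc : t₁ * t₂ = t₂ * t₁ :=
          h1 t₁ (Subgroup.subset_closure (Or.inl ht₁A')) t₂ (Subgroup.subset_closure (Or.inr ht₂A))
        show _ * _ = _ * _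
        rw [← map_mul, ← map_mul, hc]
    · rcases ht₂ with ht₂X | ht₂A
      rcases ht₂X with ht₂X | ht₂A'
      · rw [hone t₂ ht₂X]; exact Commute.one_right _
      · have hc : t₁ * t₂ = t₂ * t₁ :=
          h1 t₁ (Subgroup.subset_closure (Or.inr ht₁A)) t₂ (Subgroup.subset_closure (Or.inl ht₂A'))
        show _ * _ = _ * _
        rw [← map_mul, ← map_mul, hc]
      · have hc : t₁ * t₂ = t₂ * t₁ :=
          h1 t₁ (Subgroup.subset_closure (Or.inr ht₁A)) t₂ (Subgroup.subset_closure (Or.inr ht₂A))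
        show _ * _ = _ * _
        rw [← map_mul, ← map_mul, hc]
  have hQcomm : ∀ u v : H ⧸ N, Commute u v := by
    intro u v
    have hu : u ∈ Subgroup.closure ((QuotientGroup.mk' N) '' (X ∪ Set.range a ∪ Set.range a')) := by
      rw [hsurj]; trivial
    have hv : v ∈ Subgroup.closure ((QuotientGroup.mk' N) '' (X ∪ Set.range a ∪ Set.range a')) := by
      rw [hsurj]; trivial
    exact closure_comm hgc u hu v hv
  have hD1 : derivedSeries H 1 ≤ N := by
    rw [derivedSeries_one, _root_.commutator_def]
    refine Subgroup.commutator_le.mpr fun g _ h _ => ?_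
    rw [← QuotientGroup.eq_one_iff]
    show (QuotientGroup.mk' N) ⁅g, h⁆ = 1
    rw [map_commutatorElement]
    exact commutatorElement_eq_one_iff_commute.mpr (hQcomm _ _)
  have hD2 : derivedSeries H 2 ≤ ⊥ := by
    rw [show (2 : ℕ) = 1 + 1 from rfl, derivedSeries_succ]
    refine Subgroup.commutator_le.mpr fun g hg h hh => ?_
    have hcm : Commute g h := part1 g (hD1 hg) h (hD1 hh)
    rw [Subgroup.mem_bot]
    exact commutatorElement_eq_one_iff_commute.mpr hcm
  exact le_bot_iff.mp hD2
end

section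
/- Let F be a free group of finite rank, R a finite subset of F, ⟪R⟫ the normal closure of R in F, and G = F/⟪R⟫. If G is residually finite, then the word problem of G is decidable: the set {w ∈ F : w ∈ ⟪R⟫} is computable with respect to a standard encoding of the elements of F. -/
set_option linter.unnecessarySimpa false

namespace McK

open Primrec

variable {k : ℕ}

abbrev W (k : ℕ) := List (Fin k × Bool)

def rstep (x : Fin k × Bool) (ys : W k) : W k :=
  List.casesOn ys [x] fun y t => if x = (y.1, !y.2) then t else x :: y :: t

lemma reduce_eq_foldr' (L : W k) : FreeGroup.reduce L = L.foldr rstep [] := by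
  induction L with
  | nil => rfl
  | cons x t ih =>
    rw [FreeGroup.reduce.cons, ih, List.foldr_cons, rstep]
    cases List.foldr rstep [] t with
    | nil => rfl
    | cons y ys => simp [Prod.ext_iff]

lemma primrec_reduce : Primrec (FreeGroup.reduce : W k → W k) := by
  have h : Primrec₂ (fun (_ : W k) (p : (Fin k × Bool) × W k) => rstep p.1 p.2) := by
    have hcond : PrimrecPred (fun (a : (W k × ((Fin k × Bool) × W k)) × ((Fin k × Bool) × W k)) =>
        a.1.2.1 = (a.2.1.1, !a.2.1.2)) :=
      Primrec.eq.comp ((fst.comp snd).comp fst)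
        (Primrec.pair ((fst.comp fst).comp snd) (Primrec.not.comp ((snd.comp fst).comp snd)))
    have hmain := list_casesOn (α := W k × ((Fin k × Bool) × W k)) (σ := W k)
      (f := fun a => a.2.2) (g := fun a => [a.2.1])
      (h := fun a p => if a.2.1 = (p.1.1, !p.1.2) then p.2 else a.2.1 :: p.1 :: p.2)
      (snd.comp snd) (list_cons.comp (fst.comp snd) (const []))
      ((Primrec.ite hcond (snd.comp snd)
        (list_cons.comp ((fst.comp snd).comp fst)
          (list_cons.comp (fst.comp snd) (snd.comp snd)))).to₂)
    exact hmain.to₂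
  exact (list_foldr Primrec.id (const []) h).of_eq fun L => (reduce_eq_foldr' L).symm

lemma re_exists {α : Type*} [Primcodable α] {f : α → ℕ → Bool} (hf : Computable₂ f) :
    REPred fun a => ∃ n, f a n = true := by
  have h : Partrec fun a => Nat.rfind (fun n => Part.some (f a n)) := Partrec.rfind hf.partrec₂
  refine h.dom_re.of_eq fun a => ?_
  refine Nat.rfind_dom.trans ?_
  simp


section Mem

variable (R : Finset (FreeGroup (Fin k)))

noncomputable def RL : List (W k) := (R.toList ++ R.toList.map (·⁻¹)).map FreeGroup.toWord

noncomputable def conjWord (p : W k × ℕ) : W k := p.1 ++ (RL R).getD p.2 [] ++ FreeGroup.invRev p.1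

noncomputable def wordOf (L : List (W k × ℕ)) : W k := (L.map (conjWord R)).flatten

noncomputable def check1 (w : W k) (n : ℕ) : Bool :=
  Option.casesOn (Encodable.decode (α := List (W k × ℕ)) n) false
    fun L => decide (FreeGroup.reduce (wordOf R L) = FreeGroup.reduce w)

local notation "N" => Subgroup.normalClosure (R : Set (FreeGroup (Fin k)))

lemma exists_getD {α : Type*} (d : α) {a : α} : ∀ {l : List α}, a ∈ l → ∃ i, l.getD i d = a := by
  intro l
  induction l with
  | nil => intro h; simp at h
  | cons b t ih =>
    intro h
    rcases List.mem_cons.1 h with rfl | h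
    · exact ⟨0, rfl⟩
    · rcases ih h with ⟨i, hi⟩
      exact ⟨i + 1, hi⟩

lemma mk_flatten : ∀ Ls : List (W k), FreeGroup.mk Ls.flatten = (Ls.map FreeGroup.mk).prod
  | [] => rfl
  | L :: Ls => by
      rw [List.flatten_cons, ← FreeGroup.mul_mk, List.map_cons, List.prod_cons, mk_flatten Ls]

lemma mk_conjWord (p : W k × ℕ) :
    FreeGroup.mk (conjWord R p) =
      FreeGroup.mk p.1 * FreeGroup.mk ((RL R).getD p.2 []) * (FreeGroup.mk p.1)⁻¹ := by
  rw [conjWord, ← FreeGroup.mul_mk, ← FreeGroup.mul_mk, FreeGroup.inv_mk]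

lemma mk_mem_of_mem_RL {a : W k} (ha : a ∈ RL R) : FreeGroup.mk a ∈ N := by
  unfold RL at ha
  rcases List.mem_map.1 ha with ⟨x, hx, rfl⟩
  rw [FreeGroup.mk_toWord]
  rcases List.mem_append.1 hx with hx | hx
  · exact Subgroup.subset_normalClosure (Finset.mem_toList.1 hx)
  · rcases List.mem_map.1 hx with ⟨y, hy, rfl⟩
    exact inv_mem (Subgroup.subset_normalClosure (Finset.mem_toList.1 hy))

lemma mk_getD_RL_mem (i : ℕ) : FreeGroup.mk ((RL R).getD i []) ∈ N := by
  by_cases h : i < (RL R).length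
  · rw [List.getD_eq_getElem _ _ h]
    exact mk_mem_of_mem_RL R (List.getElem_mem h)
  · rw [List.getD_eq_default _ _ (le_of_not_gt h)]
    exact one_mem _
lemma mk_conjWord_mem (p : W k × ℕ) : FreeGroup.mk (conjWord R p) ∈ N := by
  rw [mk_conjWord]
  exact (Subgroup.normalClosure_normal).conj_mem _ (mk_getD_RL_mem R p.2) _

lemma mk_wordOf_mem (L : List (W k × ℕ)) : FreeGroup.mk (wordOf R L) ∈ N := by
  rw [wordOf, mk_flatten, List.map_map]
  exact Subgroup.list_prod_mem _ (by
    intro x hx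
    rcases List.mem_map.1 hx with ⟨p, _, rfl⟩
    exact mk_conjWord_mem R p)

lemma exists_conjWord {y : FreeGroup (Fin k)}
    (hy : y ∈ Group.conjugatesOfSet (R : Set (FreeGroup (Fin k))) ∪
      (Group.conjugatesOfSet (R : Set (FreeGroup (Fin k))))⁻¹) :
    ∃ p : W k × ℕ, FreeGroup.mk (conjWord R p) = y := by
  have key : ∃ (u r : FreeGroup (Fin k)), (r ∈ R ∨ r⁻¹ ∈ R) ∧ u * r * u⁻¹ = y := by
    rcases hy with hy | hy
    · rcases Group.mem_conjugatesOfSet_iff.1 hy with ⟨a, ha, hc⟩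
      rcases isConj_iff.1 hc with ⟨c, hc⟩
      exact ⟨c, a, Or.inl ha, hc⟩
    · rcases Group.mem_conjugatesOfSet_iff.1 (Set.mem_inv.1 hy) with ⟨a, ha, hc⟩
      rcases isConj_iff.1 hc with ⟨c, hc⟩
      refine ⟨c, a⁻¹, Or.inr (by simpa using ha), ?_⟩
      have := congrArg (·⁻¹) hc
      simpa [mul_assoc] using this
  rcases key with ⟨u, r, hr, rfl⟩
  have hrl : r.toWord ∈ RL R := by
    rw [RL]
    rcases hr with hr | hr
    · exact List.mem_map_of_mem (List.mem_append.2 (Or.inl (Finset.mem_toList.2 hr)))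
    · refine List.mem_map_of_mem (List.mem_append.2 (Or.inr ?_))
      have : r = (r⁻¹)⁻¹ := by simp
      rw [this]
      exact List.mem_map_of_mem (Finset.mem_toList.2 hr)
  rcases exists_getD ([] : W k) hrl with ⟨i, hi⟩
  refine ⟨(u.toWord, i), ?_⟩
  rw [mk_conjWord, hi, FreeGroup.mk_toWord, FreeGroup.mk_toWord]

lemma mem_iff_exists_rep {w : W k} :
    FreeGroup.mk w ∈ N ↔ ∃ L, FreeGroup.mk (wordOf R L) = FreeGroup.mk w := by
  constructor
  · intro hw
    have h1 : FreeGroup.mk w ∈ Submonoid.closure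
        ((Group.conjugatesOfSet (R : Set (FreeGroup (Fin k)))) ∪
          (Group.conjugatesOfSet (R : Set (FreeGroup (Fin k))))⁻¹) := by
      rw [← Subgroup.closure_toSubmonoid]
      exact hw
    rcases Submonoid.exists_list_of_mem_closure h1 with ⟨l, hl, hprod⟩
    suffices h : ∀ l' : List (FreeGroup (Fin k)),
        (∀ y ∈ l', y ∈ Group.conjugatesOfSet (R : Set (FreeGroup (Fin k))) ∪
          (Group.conjugatesOfSet (R : Set (FreeGroup (Fin k))))⁻¹) →
        ∃ L, FreeGroup.mk (wordOf R L) = l'.prod by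
      rcases h l hl with ⟨L, hL⟩
      exact ⟨L, by rw [hL, hprod]⟩
    intro l'
    induction l' with
    | nil => exact fun _ => ⟨[], rfl⟩
    | cons y t ih =>
      intro hmem
      rcases exists_conjWord R (hmem y List.mem_cons_self) with ⟨p, hp⟩
      rcases ih (fun z hz => hmem z (List.mem_cons_of_mem _ hz)) with ⟨L, hL⟩
      refine ⟨p :: L, ?_⟩
      rw [wordOf, List.map_cons, List.flatten_cons, ← FreeGroup.mul_mk, List.prod_cons, hp]
      rw [wordOf] at hL
      rw [hL]
  · rintro ⟨L, hL⟩
    rw [← hL]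
    exact mk_wordOf_mem R L

lemma mem_iff_check1 {w : W k} :
    FreeGroup.mk w ∈ N ↔ ∃ n, check1 R w n = true := by
  rw [mem_iff_exists_rep R]
  constructor
  · rintro ⟨L, hL⟩
    refine ⟨Encodable.encode L, ?_⟩
    rw [check1, Encodable.encodek]
    have : FreeGroup.reduce (wordOf R L) = FreeGroup.reduce w := by
      rw [← FreeGroup.toWord_mk, ← FreeGroup.toWord_mk, hL]
    simpa using this
  · rintro ⟨n, hn⟩
    rw [check1] at hn
    rcases hd : Encodable.decode (α := List (W k × ℕ)) n with _ | L
    · rw [hd] at hn; simp at hn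
    · rw [hd] at hn
      simp only [decide_eq_true_eq] at hn
      refine ⟨L, ?_⟩
      apply FreeGroup.toWord_injective
      rw [FreeGroup.toWord_mk, FreeGroup.toWord_mk, hn]

end Mem

section Prim1

open Primrec

lemma primrec_invRev : Primrec (FreeGroup.invRev : W k → W k) := by
  show Primrec fun w : W k => (w.map fun g : Fin k × Bool => (g.1, !g.2)).reverse
  have hg : Primrec₂ fun (_ : W k) (x : Fin k × Bool) => ((x.1, !x.2) : Fin k × Bool) := by
    show Primrec fun q : W k × (Fin k × Bool) => ((q.2.1, !q.2.2) : Fin k × Bool)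
    exact Primrec.pair (fst.comp snd) (Primrec.not.comp (snd.comp snd))
  exact list_reverse.comp (list_map Primrec.id hg)

lemma primrec_conjWord (R : Finset (FreeGroup (Fin k))) : Primrec (conjWord R) := by
  show Primrec fun p : W k × ℕ => p.1 ++ (RL R).getD p.2 [] ++ FreeGroup.invRev p.1
  exact list_append.comp
    (list_append.comp fst ((list_getD ([] : W k)).comp (const (RL R)) snd))
    (primrec_invRev.comp fst)

lemma primrec_wordOf (R : Finset (FreeGroup (Fin k))) : Primrec (wordOf R) := by
  show Primrec fun L : List (W k × ℕ) => (L.map (conjWord R)).flatten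
  have hg : Primrec₂ fun (_ : List (W k × ℕ)) (p : W k × ℕ) => conjWord R p := by
    show Primrec fun q : List (W k × ℕ) × (W k × ℕ) => conjWord R q.2
    exact (primrec_conjWord R).comp snd
  exact list_flatten.comp (list_map Primrec.id hg)

lemma primrec_check1 (R : Finset (FreeGroup (Fin k))) : Primrec₂ (check1 R) := by
  show Primrec fun a : W k × ℕ => check1 R a.1 a.2
  apply Primrec.of_eq
    (f := fun a : W k × ℕ =>
      Option.casesOn (Encodable.decode (α := List (W k × ℕ)) a.2) false fun L =>
        decide (FreeGroup.reduce (wordOf R L) = FreeGroup.reduce a.1))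
  swap
  · intro a; rfl
  apply option_casesOn (Primrec.decode.comp snd) (const false)
  show Primrec fun q : (W k × ℕ) × List (W k × ℕ) =>
    decide (FreeGroup.reduce (wordOf R q.2) = FreeGroup.reduce q.1.1)
  exact (Primrec.eq.comp (primrec_reduce.comp ((primrec_wordOf R).comp snd))
    (primrec_reduce.comp (fst.comp fst))).decide

end Prim1


section Co

def pfn (ps : List (List ℕ)) (i x : ℕ) : ℕ := (ps.getD i []).getD x 0

def pinv (ps : List (List ℕ)) (m i y : ℕ) : ℕ :=
  (List.range m).findIdx fun x => decide (pfn ps i x = y)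

def act (ps : List (List ℕ)) (m : ℕ) (l : Fin k × Bool) (x : ℕ) : ℕ :=
  cond l.2 (pfn ps (l.1 : ℕ) x) (pinv ps m (l.1 : ℕ) x)

def evalP (ps : List (List ℕ)) (m : ℕ) (v : W k) (x : ℕ) : ℕ :=
  v.foldr (fun l acc => act ps m l acc) x

/-- permCongr as a monoid hom -/
def permCongrHom {K : Type} {m : ℕ} (e : K ≃ Fin m) : Equiv.Perm K →* Equiv.Perm (Fin m) where
  toFun p := e.permCongr p
  map_one' := by ext x; simp
  map_mul' p q := by ext x; simp [Equiv.permCongr_apply, Equiv.Perm.mul_apply]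

theorem bridge {m : ℕ} (ps : List (List ℕ))
    (h1 : ∀ i < k, ∀ x < m, pfn ps i x < m)
    (h2 : ∀ i < k, ∀ x < m, ∀ y < m, pfn ps i x = pfn ps i y → x = y) :
    ∃ φ : FreeGroup (Fin k) →* Equiv.Perm (Fin m),
      (∀ (i : Fin k) (x : Fin m), ((φ (FreeGroup.of i)) x : ℕ) = pfn ps (i : ℕ) (x : ℕ)) ∧
      (∀ (v : W k) (x : Fin m), ((φ (FreeGroup.mk v)) x : ℕ) = evalP ps m v (x : ℕ)) := by
  -- the permutations
  have hbij : ∀ i : Fin k, Function.Bijective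
      (fun x : Fin m => (⟨pfn ps i x, h1 i i.2 x x.2⟩ : Fin m)) := by
    intro i
    rw [← Finite.injective_iff_bijective]
    intro x y hxy
    exact Fin.ext (h2 i i.2 x x.2 y y.2 (congrArg Fin.val hxy))
  let σ : Fin k → Equiv.Perm (Fin m) := fun i => Equiv.ofBijective _ (hbij i)
  have hσ : ∀ (i : Fin k) (x : Fin m), ((σ i) x : ℕ) = pfn ps (i : ℕ) (x : ℕ) := fun i x => rfl
  have hσinv : ∀ (i : Fin k) (y : Fin m), (((σ i)⁻¹) y : ℕ) = pinv ps m (i : ℕ) (y : ℕ) := by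
    intro i y
    have hex : ∃ x ∈ List.range m, decide (pfn ps (i : ℕ) x = (y : ℕ)) = true := by
      rcases (hbij i).2 y with ⟨x, hx⟩
      exact ⟨(x : ℕ), List.mem_range.2 x.2, by simp [← congrArg Fin.val hx]⟩
    have hlt : (List.range m).findIdx (fun x => decide (pfn ps (i:ℕ) x = (y:ℕ))) <
        (List.range m).length := List.findIdx_lt_length_of_exists hex
    have hp := List.findIdx_getElem (w := hlt)
    rw [List.getElem_range] at hp
    have hltm : pinv ps m (i : ℕ) (y : ℕ) < m := by
      have h5 := hlt
      rwa [List.length_range] at h5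
    have : σ i ⟨pinv ps m (i : ℕ) (y : ℕ), hltm⟩ = y := by
      apply Fin.ext
      rw [hσ]
      simpa [pinv] using hp
    have h4 : ((σ i)⁻¹) y = ⟨pinv ps m (i : ℕ) (y : ℕ), hltm⟩ := by
      exact Equiv.Perm.inv_eq_iff_eq.2 this.symm
    rw [h4]
  refine ⟨FreeGroup.lift σ, fun i x => by simp [FreeGroup.lift_apply_of, hσ], ?_⟩
  intro v
  induction v with
  | nil => intro x; simp [evalP]
  | cons l t ih =>
    intro x
    have hsplit : FreeGroup.mk (l :: t) = FreeGroup.mk [l] * FreeGroup.mk t := by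
      rw [FreeGroup.mul_mk]; rfl
    have h1l : FreeGroup.lift σ (FreeGroup.mk [l]) = cond l.2 (σ l.1) ((σ l.1)⁻¹) := by
      rw [FreeGroup.lift_mk]
      cases hb : l.2 <;> simp [hb]
    rw [hsplit, map_mul, Equiv.Perm.mul_apply, h1l]
    have heval : evalP ps m (l :: t) (x : ℕ) = act ps m l (evalP ps m t (x : ℕ)) := rfl
    rw [heval, ← ih x]
    cases hb : l.2 with
    | true => simp only [act, hb, cond_true]; exact hσ l.1 _
    | false => simp only [act, hb, cond_false]; exact hσinv l.1 _

def allN (f : ℕ → Bool) : ℕ → Bool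
  | 0 => true
  | n + 1 => f n && allN f n

def exN (f : ℕ → Bool) : ℕ → Bool
  | 0 => false
  | n + 1 => f n || exN f n

lemma allN_iff (f : ℕ → Bool) : ∀ n, allN f n = true ↔ ∀ i < n, f i = true := by
  intro n
  induction n with
  | zero => simp [allN]
  | succ n ih =>
    rw [allN, Bool.and_eq_true, ih]
    constructor
    · rintro ⟨h1, h2⟩ i hi
      rcases Nat.lt_succ_iff_lt_or_eq.1 hi with hi | rfl
      · exact h2 i hi
      · exact h1
    · intro h
      exact ⟨h n (Nat.lt_succ_self n), fun i hi => h i (Nat.lt_succ_of_lt hi)⟩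

lemma exN_iff (f : ℕ → Bool) : ∀ n, exN f n = true ↔ ∃ i, i < n ∧ f i = true := by
  intro n
  induction n with
  | zero => simp [exN]
  | succ n ih =>
    rw [exN, Bool.or_eq_true, ih]
    constructor
    · rintro (h | ⟨i, hi, h⟩)
      · exact ⟨n, Nat.lt_succ_self n, h⟩
      · exact ⟨i, Nat.lt_succ_of_lt hi, h⟩
    · rintro ⟨i, hi, h⟩
      rcases Nat.lt_succ_iff_lt_or_eq.1 hi with hi | rfl
      · exact Or.inr ⟨i, hi, h⟩
      · exact Or.inl h

lemma getD_map_finRange {n : ℕ} {α : Type*} (f : Fin n → α) (d : α) (i : Fin n) :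
    ((List.finRange n).map f).getD (i : ℕ) d = f i := by
  have hlen : (i : ℕ) < ((List.finRange n).map f).length := by simpa using i.2
  rw [List.getD_eq_getElem _ _ hlen, List.getElem_map]
  congr 1
  simp [Fin.ext_iff]

section Check2

variable (R : Finset (FreeGroup (Fin k)))

noncomputable def RW : List (W k) := R.toList.map FreeGroup.toWord

def okRange (ps : List (List ℕ)) (m : ℕ) : Bool :=
  allN (fun i => allN (fun x => decide (pfn ps i x < m)) m) k

def okInj (ps : List (List ℕ)) (m : ℕ) : Bool :=
  allN (fun i => allN (fun x => allN (fun y =>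
    if pfn ps i x = pfn ps i y then decide (x = y) else true) m) m) k

noncomputable def okRel (ps : List (List ℕ)) (m : ℕ) : Bool :=
  allN (fun j => allN (fun x => decide (evalP ps m ((RW R).getD j []) x = x)) m)
    (RW R).length

def okW (w : W k) (ps : List (List ℕ)) (m : ℕ) : Bool :=
  exN (fun x => decide (evalP ps m w x ≠ x)) m

noncomputable def check2 (w : W k) (n : ℕ) : Bool :=
  Option.casesOn (Encodable.decode (α := ℕ × List (List ℕ)) n) false fun c =>
    okRange (k := k) c.2 (c.1 + 1) && okInj (k := k) c.2 (c.1 + 1) &&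
      okRel R c.2 (c.1 + 1) && okW w c.2 (c.1 + 1)

lemma okRange_iff (ps : List (List ℕ)) (m : ℕ) :
    okRange (k := k) ps m = true ↔ ∀ i < k, ∀ x < m, pfn ps i x < m := by
  simp [okRange, allN_iff]

lemma okInj_iff (ps : List (List ℕ)) (m : ℕ) :
    okInj (k := k) ps m = true ↔
      ∀ i < k, ∀ x < m, ∀ y < m, pfn ps i x = pfn ps i y → x = y := by
  simp only [okInj, allN_iff]
  refine forall_congr' fun i => imp_congr_right fun _ =>
    forall_congr' fun x => imp_congr_right fun _ => forall_congr' fun y =>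
    imp_congr_right fun _ => ?_
  split_ifs with h <;> simp [h]

lemma okRel_iff (ps : List (List ℕ)) (m : ℕ) :
    okRel R ps m = true ↔ ∀ v ∈ RW R, ∀ x < m, evalP ps m v x = x := by
  simp only [okRel, allN_iff, decide_eq_true_eq]
  constructor
  · intro h v hv x hx
    rcases List.getElem_of_mem hv with ⟨j, hj, rfl⟩
    have := h j hj x hx
    rwa [List.getD_eq_getElem _ _ hj] at this
  · intro h j hj x hx
    rw [List.getD_eq_getElem _ _ hj]
    exact h _ (List.getElem_mem hj) x hx

lemma okW_iff (w : W k) (ps : List (List ℕ)) (m : ℕ) :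
    okW w ps m = true ↔ ∃ x, x < m ∧ evalP ps m w x ≠ x := by
  simp [okW, exN_iff]

local notation "N" => Subgroup.normalClosure (R : Set (FreeGroup (Fin k)))

theorem notmem_iff_check2
    (hres : ∀ g : FreeGroup (Fin k) ⧸ N,
      g ≠ 1 → ∃ (K : Type) (_ : Group K) (_ : Finite K)
        (φ : (FreeGroup (Fin k) ⧸ N) →* K), φ g ≠ 1)
    (w : W k) : FreeGroup.mk w ∉ N ↔ ∃ n, check2 R w n = true := by
  constructor
  · -- residual finiteness gives a witness
    intro hnot
    have hg : (QuotientGroup.mk (FreeGroup.mk w) : FreeGroup (Fin k) ⧸ N) ≠ 1 := by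
      rw [Ne, QuotientGroup.eq_one_iff]
      exact hnot
    obtain ⟨K, _, _, ψ, hψ⟩ := hres _ hg
    letI : Fintype K := Fintype.ofFinite K
    set m := Fintype.card K with hmdef
    have hm : 0 < m := Fintype.card_pos
    set e : K ≃ Fin m := Fintype.equivFin K with hedef
    set χ : FreeGroup (Fin k) →* K := ψ.comp (QuotientGroup.mk' N) with hχdef
    set ps : List (List ℕ) := (List.finRange k).map
      (fun i => (List.finRange m).map
        (fun x => ((e (χ (FreeGroup.of i) * e.symm x)) : ℕ))) with hpsdef
    have hpfn : ∀ (i : Fin k) (x : Fin m),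
        pfn ps (i : ℕ) (x : ℕ) = (e (χ (FreeGroup.of i) * e.symm x) : ℕ) := by
      intro i x
      rw [pfn, hpsdef, getD_map_finRange, getD_map_finRange]
    have h1 : ∀ i < k, ∀ x < m, pfn ps i x < m := by
      intro i hi x hx
      have := hpfn ⟨i, hi⟩ ⟨x, hx⟩
      rw [this]
      exact (e _).2
    have h2 : ∀ i < k, ∀ x < m, ∀ y < m, pfn ps i x = pfn ps i y → x = y := by
      intro i hi x hx y hy hxy
      rw [hpfn ⟨i, hi⟩ ⟨x, hx⟩, hpfn ⟨i, hi⟩ ⟨y, hy⟩] at hxy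
      have := e.injective (Fin.ext hxy)
      have := e.symm.injective (mul_left_cancel this)
      exact congrArg Fin.val this
    obtain ⟨φ, hof, hmk⟩ := bridge (k := k) ps h1 h2
    have hφM : φ = (permCongrHom e).comp ((MulAction.toPermHom K K).comp χ) := by
      apply FreeGroup.ext_hom
      intro i
      apply Equiv.ext
      intro x
      apply Fin.ext
      rw [hof i x, hpfn i x]
      simp [permCongrHom, Equiv.permCongr_apply, smul_eq_mul]
    have hev : ∀ (v : W k) (x : Fin m),
        evalP ps m v (x : ℕ) = (e (χ (FreeGroup.mk v) * e.symm x) : ℕ) := by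
      intro v x
      rw [← hmk v x, hφM]
      simp [permCongrHom, Equiv.permCongr_apply, smul_eq_mul]
    refine ⟨Encodable.encode (m - 1, ps), ?_⟩
    have hm1 : m - 1 + 1 = m := Nat.succ_pred_eq_of_pos hm
    show (Option.casesOn (Encodable.decode
        (α := ℕ × List (List ℕ)) (Encodable.encode (m - 1, ps))) false fun c =>
      okRange (k := k) c.2 (c.1 + 1) && okInj (k := k) c.2 (c.1 + 1) &&
        okRel R c.2 (c.1 + 1) && okW w c.2 (c.1 + 1)) = true
    rw [Encodable.encodek]
    show (okRange (k := k) ps (m - 1 + 1) && okInj (k := k) ps (m - 1 + 1) &&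
        okRel R ps (m - 1 + 1) && okW w ps (m - 1 + 1)) = true
    rw [hm1, Bool.and_eq_true, Bool.and_eq_true, Bool.and_eq_true]
    refine ⟨⟨⟨(okRange_iff ps m).2 h1, (okInj_iff ps m).2 h2⟩, ?_⟩, ?_⟩
    · rw [okRel_iff]
      intro v hv x hx
      rcases List.mem_map.1 hv with ⟨r, hr, rfl⟩
      have hrR : r ∈ (R : Set (FreeGroup (Fin k))) := Finset.mem_toList.1 hr
      have hr1 : χ r = 1 := by
        rw [hχdef]
        simp only [MonoidHom.comp_apply]
        have : (QuotientGroup.mk' N) r = 1 := by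
          rw [QuotientGroup.mk'_apply, QuotientGroup.eq_one_iff]
          exact Subgroup.subset_normalClosure hrR
        rw [this, map_one]
      have := hev r.toWord ⟨x, hx⟩
      rw [FreeGroup.mk_toWord, hr1, one_mul, Equiv.apply_symm_apply] at this
      exact this
    · rw [okW_iff]
      refine ⟨(e 1 : Fin m), (e 1).2, ?_⟩
      have hx : ((e 1 : Fin m) : ℕ) < m := (e 1).2
      have heq := hev w ⟨(e 1 : Fin m), hx⟩
      have : (⟨((e 1 : Fin m) : ℕ), hx⟩ : Fin m) = e 1 := rfl
      rw [this, Equiv.symm_apply_apply, mul_one] at heq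
      rw [heq]
      intro hcon
      apply hψ
      have : e (χ (FreeGroup.mk w)) = e 1 := Fin.ext hcon
      have := e.injective this
      rw [hχdef] at this
      simpa using this
  · -- a witness certifies non-membership
    rintro ⟨n, hn⟩ hmem
    rw [check2] at hn
    rcases hdec : Encodable.decode (α := ℕ × List (List ℕ)) n with _ | c
    · rw [hdec] at hn; simp at hn
    rw [hdec] at hn
    simp only [Bool.and_eq_true] at hn
    obtain ⟨⟨⟨hr1, hr2⟩, hr3⟩, hr4⟩ := hn
    set m := c.1 + 1
    have h1 := (okRange_iff c.2 m).1 hr1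
    have h2 := (okInj_iff c.2 m).1 hr2
    have h3 := (okRel_iff R c.2 m).1 hr3
    have h4 := (okW_iff w c.2 m).1 hr4
    obtain ⟨φ, hof, hmk⟩ := bridge (k := k) c.2 h1 h2
    have hker : N ≤ φ.ker := by
      apply Subgroup.normalClosure_le_normal
      intro r hr
      rw [SetLike.mem_coe, MonoidHom.mem_ker]
      apply Equiv.ext
      intro x
      apply Fin.ext
      have : φ r = φ (FreeGroup.mk r.toWord) := by rw [FreeGroup.mk_toWord]
      rw [this, hmk r.toWord x]
      have hvw : FreeGroup.toWord r ∈ RW R :=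
        List.mem_map_of_mem (Finset.mem_toList.2 hr)
      simpa using h3 _ hvw (x : ℕ) x.2
    have hone : φ (FreeGroup.mk w) = 1 := MonoidHom.mem_ker.1 (hker hmem)
    rcases h4 with ⟨x, hx, hne⟩
    apply hne
    have := hmk w ⟨x, hx⟩
    rw [hone] at this
    simpa using this.symm

end Check2

section Prim

open Primrec

variable {α : Type*} [Primcodable α]

lemma primrec_pfn {ps : α → List (List ℕ)} {i x : α → ℕ}
    (hps : Primrec ps) (hi : Primrec i) (hx : Primrec x) :
    Primrec fun a => pfn (ps a) (i a) (x a) :=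
  (list_getD 0).comp ((list_getD ([] : List ℕ)).comp hps hi) hx

lemma primrec_pinv {ps : α → List (List ℕ)} {m i y : α → ℕ}
    (hps : Primrec ps) (hm : Primrec m) (hi : Primrec i) (hy : Primrec y) :
    Primrec fun a => pinv (ps a) (m a) (i a) (y a) :=
  list_findIdx (list_range.comp hm)
    ((Primrec.eq.comp
        (primrec_pfn (hps.comp fst) (hi.comp fst) snd) (hy.comp fst)).decide.to₂)

lemma primrec_act {ps : α → List (List ℕ)} {m : α → ℕ} {l : α → Fin k × Bool} {x : α → ℕ}
    (hps : Primrec ps) (hm : Primrec m) (hl : Primrec l) (hx : Primrec x) :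
    Primrec fun a => act (ps a) (m a) (l a) (x a) :=
  Primrec.cond (snd.comp hl)
    (primrec_pfn hps (fin_val.comp (fst.comp hl)) hx)
    (primrec_pinv hps hm (fin_val.comp (fst.comp hl)) hx)

lemma primrec_evalP {ps : α → List (List ℕ)} {m : α → ℕ} {v : α → W k} {x : α → ℕ}
    (hps : Primrec ps) (hm : Primrec m) (hv : Primrec v) (hx : Primrec x) :
    Primrec fun a => evalP (ps a) (m a) (v a) (x a) :=
  list_foldr hv hx
    ((primrec_act (hps.comp fst) (hm.comp fst) (fst.comp snd) (snd.comp snd)).to₂)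

lemma allN_eq_rec (f : ℕ → Bool) (n : ℕ) :
    allN f n = Nat.rec true (fun j ih => cond (f j) ih false) n := by
  induction n with
  | zero => rfl
  | succ n ih => rw [allN, ih]; cases hfn : f n <;> simp [hfn]

lemma exN_eq_rec (f : ℕ → Bool) (n : ℕ) :
    exN f n = Nat.rec false (fun j ih => cond (f j) true ih) n := by
  induction n with
  | zero => rfl
  | succ n ih => rw [exN, ih]; cases hfn : f n <;> simp [hfn]

lemma primrec_allN {f : α → ℕ → Bool} {n : α → ℕ}
    (hf : Primrec₂ f) (hn : Primrec n) : Primrec fun a => allN (f a) (n a) :=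
  (nat_rec' hn (const true)
    ((Primrec.cond (hf.comp fst (fst.comp snd)) (snd.comp snd) (const false)).to₂)).of_eq
    fun a => (allN_eq_rec (f a) (n a)).symm

lemma primrec_exN {f : α → ℕ → Bool} {n : α → ℕ}
    (hf : Primrec₂ f) (hn : Primrec n) : Primrec fun a => exN (f a) (n a) :=
  (nat_rec' hn (const false)
    ((Primrec.cond (hf.comp fst (fst.comp snd)) (const true) (snd.comp snd)).to₂)).of_eq
    fun a => (exN_eq_rec (f a) (n a)).symm

lemma primrec_okRange {ps : α → List (List ℕ)} {m : α → ℕ}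
    (hps : Primrec ps) (hm : Primrec m) :
    Primrec fun a => okRange (k := k) (ps a) (m a) := by
  apply primrec_allN _ (const k)
  show Primrec fun p : α × ℕ =>
    allN (fun x => decide (pfn (ps p.1) p.2 x < m p.1)) (m p.1)
  apply primrec_allN _ (hm.comp fst)
  show Primrec fun q : (α × ℕ) × ℕ =>
    decide (pfn (ps q.1.1) q.1.2 q.2 < m q.1.1)
  exact (nat_lt.comp
    (primrec_pfn (hps.comp (fst.comp fst)) (snd.comp fst) snd)
    (hm.comp (fst.comp fst))).decide

lemma primrec_okInj {ps : α → List (List ℕ)} {m : α → ℕ}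
    (hps : Primrec ps) (hm : Primrec m) :
    Primrec fun a => okInj (k := k) (ps a) (m a) := by
  apply primrec_allN _ (const k)
  show Primrec fun p : α × ℕ =>
    allN (fun x => allN (fun y =>
      if pfn (ps p.1) p.2 x = pfn (ps p.1) p.2 y then decide (x = y) else true) (m p.1)) (m p.1)
  apply primrec_allN _ (hm.comp fst)
  show Primrec fun q : (α × ℕ) × ℕ =>
    allN (fun y =>
      if pfn (ps q.1.1) q.1.2 q.2 = pfn (ps q.1.1) q.1.2 y then decide (q.2 = y) else true)
      (m q.1.1)
  apply primrec_allN _ (hm.comp (fst.comp fst))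
  show Primrec fun r : ((α × ℕ) × ℕ) × ℕ =>
    if pfn (ps r.1.1.1) r.1.1.2 r.1.2 = pfn (ps r.1.1.1) r.1.1.2 r.2 then decide (r.1.2 = r.2)
    else true
  exact Primrec.ite
    (Primrec.eq.comp
      (primrec_pfn (hps.comp (fst.comp (fst.comp fst))) (snd.comp (fst.comp fst))
        (snd.comp fst))
      (primrec_pfn (hps.comp (fst.comp (fst.comp fst))) (snd.comp (fst.comp fst)) snd))
    (Primrec.eq.comp (snd.comp fst) snd).decide (const true)

lemma primrec_okRel (R : Finset (FreeGroup (Fin k))) {ps : α → List (List ℕ)} {m : α → ℕ}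
    (hps : Primrec ps) (hm : Primrec m) :
    Primrec fun a => okRel R (ps a) (m a) := by
  apply primrec_allN _ (const (RW R).length)
  show Primrec fun p : α × ℕ =>
    allN (fun x => decide (evalP (ps p.1) (m p.1) ((RW R).getD p.2 []) x = x)) (m p.1)
  apply primrec_allN _ (hm.comp fst)
  show Primrec fun q : (α × ℕ) × ℕ =>
    decide (evalP (ps q.1.1) (m q.1.1) ((RW R).getD q.1.2 []) q.2 = q.2)
  exact (Primrec.eq.comp
    (primrec_evalP (hps.comp (fst.comp fst)) (hm.comp (fst.comp fst))
      ((list_getD ([] : W k)).comp (const (RW R)) (snd.comp fst)) snd)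
    snd).decide

lemma primrec_okW {w : α → W k} {ps : α → List (List ℕ)} {m : α → ℕ}
    (hw : Primrec w) (hps : Primrec ps) (hm : Primrec m) :
    Primrec fun a => okW (w a) (ps a) (m a) := by
  apply primrec_exN _ hm
  show Primrec fun p : α × ℕ =>
    decide (evalP (ps p.1) (m p.1) (w p.1) p.2 ≠ p.2)
  exact (PrimrecPred.not
    (Primrec.eq.comp
      (primrec_evalP (hps.comp fst) (hm.comp fst) (hw.comp fst) snd) snd)).decide

lemma primrec_check2 (R : Finset (FreeGroup (Fin k))) : Primrec₂ (check2 R) := by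
  show Primrec fun a : W k × ℕ => check2 R a.1 a.2
  apply Primrec.of_eq
    (f := fun a : W k × ℕ =>
      Option.casesOn (Encodable.decode (α := ℕ × List (List ℕ)) a.2) false fun c =>
        okRange (k := k) c.2 (c.1 + 1) && okInj (k := k) c.2 (c.1 + 1) &&
          okRel R c.2 (c.1 + 1) && okW a.1 c.2 (c.1 + 1))
  swap
  · intro a; rfl
  apply option_casesOn (Primrec.decode.comp snd) (const false)
  show Primrec fun a : (W k × ℕ) × (ℕ × List (List ℕ)) =>
    okRange (k := k) a.2.2 (a.2.1 + 1) && okInj (k := k) a.2.2 (a.2.1 + 1) &&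
      okRel R a.2.2 (a.2.1 + 1) && okW a.1.1 a.2.2 (a.2.1 + 1)
  have hps : Primrec fun a : (W k × ℕ) × (ℕ × List (List ℕ)) => a.2.2 := snd.comp snd
  have hm : Primrec fun a : (W k × ℕ) × (ℕ × List (List ℕ)) => a.2.1 + 1 :=
    succ.comp (fst.comp snd)
  have hw : Primrec fun a : (W k × ℕ) × (ℕ × List (List ℕ)) => a.1.1 := fst.comp fst
  have hb : Primrec₂ (· && · : Bool → Bool → Bool) := Primrec.dom_bool₂ _
  exact hb.comp (hb.comp (hb.comp (primrec_okRange hps hm) (primrec_okInj hps hm))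
    (primrec_okRel R hps hm)) (primrec_okW hw hps hm)

end Prim

end Co

end McK

/-- McKinsey's algorithm: if the finitely presented group `G = F_k/⟪R⟫` is residually
finite, then its word problem is decidable — the set of words (over the generators and their
formal inverses) representing elements of the normal closure `⟪R⟫` is computable. -/
theorem word_problem_decidable_of_finitely_presented_residually_finite
    (k : ℕ) (R : Finset (FreeGroup (Fin k)))
    (hres : ∀ g : FreeGroup (Fin k) ⧸ Subgroup.normalClosure (R : Set (FreeGroup (Fin k))),
      g ≠ 1 → ∃ (K : Type) (_ : Group K) (_ : Finite K)
        (φ : (FreeGroup (Fin k) ⧸ Subgroup.normalClosure (R : Set (FreeGroup (Fin k)))) →* K),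
        φ g ≠ 1) :
    ComputablePred (fun l : List (Fin k × Bool) =>
      FreeGroup.mk l ∈ Subgroup.normalClosure (R : Set (FreeGroup (Fin k)))) := by
  rw [ComputablePred.computable_iff_re_compl_re']
  constructor
  · exact (McK.re_exists ((McK.primrec_check1 R).to_comp)).of_eq
      fun w => (McK.mem_iff_check1 R).symm
  · exact (McK.re_exists ((McK.primrec_check2 R).to_comp)).of_eq
      fun w => (McK.notmem_iff_check2 R hres w).symm
end
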